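/- Closed form for the class AII† edge integral: for every w ∈ ℝ, the integral ∫_w^∞ e^{v²} · erfc(√2·v) dv converges and equals −(√π/2) · erfc(√2·w) · erfi(w) + (1/√π) · ∫_0^{1/√2} e^{−2w²(1−u²)}/(1−u²) du. (Equivalently, the function g(v) := −(√π/4)·erfc(√2 v)·erfi(v) + (1/(2√π))·∫_0^{1/√2} e^{−2v²(1−u²)}/(1−u²) du satisfies g′(v) = −(1/2)·erfc(√2 v)·e^{v²} and g(+∞) = 0; the second summand is −i√π times Owen's T-function T(2v, i/√2) analytically continued to imaginary second argument.) -/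

import Mathlib

open MeasureTheory intervalIntegral

/-- The complementary error function `erfc(t) = (2/√π) ∫_t^∞ e^{−s²} ds`. -/
noncomputable def erfc (t : ℝ) : ℝ :=
  (2 / Real.sqrt Real.pi) * ∫ s in Set.Ioi t, Real.exp (-s ^ 2)

/-- The imaginary error function `erfi(w) = (2/√π) ∫_0^w e^{s²} ds`. -/
noncomputable def erfi (w : ℝ) : ℝ :=
  (2 / Real.sqrt Real.pi) * ∫ s in (0 : ℝ)..w, Real.exp (s ^ 2)

open Set Filter

lemma gauss_integrable : Integrable (fun s : ℝ => Real.exp (-s ^ 2)) := by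
  simpa using integrable_exp_neg_mul_sq (one_pos)

lemma gauss_cont : Continuous (fun s : ℝ => Real.exp (-s ^ 2)) := by
  continuity

lemma gauss_ii (a b : ℝ) : IntervalIntegrable (fun s : ℝ => Real.exp (-s ^ 2)) volume a b :=
  gauss_cont.intervalIntegrable a b

lemma Ioi_eq (t : ℝ) : (∫ s in Ioi t, Real.exp (-s ^ 2)) =
    (∫ s in Ioi (0:ℝ), Real.exp (-s ^ 2)) - ∫ s in (0:ℝ)..t, Real.exp (-s ^ 2) := by
  have h1 := integral_Iic_add_Ioi (μ := volume) (b := t) gauss_integrable.integrableOn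
    gauss_integrable.integrableOn
  have h2 := integral_Iic_add_Ioi (μ := volume) (b := (0:ℝ)) gauss_integrable.integrableOn
    gauss_integrable.integrableOn
  have h3 := integral_Iic_sub_Iic (μ := volume) (a := (0:ℝ)) (b := t)
    gauss_integrable.integrableOn gauss_integrable.integrableOn
  linarith


lemma erfc_hasDerivAt (t : ℝ) :
    HasDerivAt erfc (-(2 / Real.sqrt Real.pi * Real.exp (-t ^ 2))) t := by
  have h : erfc = fun t => (2 / Real.sqrt Real.pi) * (∫ s in Ioi (0:ℝ), Real.exp (-s ^ 2))
      - (2 / Real.sqrt Real.pi) * ∫ s in (0:ℝ)..t, Real.exp (-s ^ 2) := by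
    funext t; rw [erfc, Ioi_eq]; ring
  rw [h]
  have h2 : HasDerivAt (fun t : ℝ => ∫ s in (0:ℝ)..t, Real.exp (-s ^ 2))
      (Real.exp (-t ^ 2)) t :=
    integral_hasDerivAt_right (gauss_ii 0 t) (gauss_cont.stronglyMeasurableAtFilter _ _)
      gauss_cont.continuousAt
  simpa using ((h2.const_mul (2 / Real.sqrt Real.pi)).const_sub _)

lemma erfi_hasDerivAt (t : ℝ) :
    HasDerivAt erfi (2 / Real.sqrt Real.pi * Real.exp (t ^ 2)) t := by
  have hc : Continuous (fun s : ℝ => Real.exp (s ^ 2)) := by continuity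
  have h2 : HasDerivAt (fun t : ℝ => ∫ s in (0:ℝ)..t, Real.exp (s ^ 2))
      (Real.exp (t ^ 2)) t :=
    integral_hasDerivAt_right (hc.intervalIntegrable 0 t)
      (hc.stronglyMeasurableAtFilter _ _) hc.continuousAt
  exact h2.const_mul (2 / Real.sqrt Real.pi)

lemma sqrt_pi_pos : 0 < Real.sqrt Real.pi := Real.sqrt_pos.2 Real.pi_pos

lemma erfc_nonneg (t : ℝ) : 0 ≤ erfc t := by
  apply mul_nonneg (by positivity)
  exact setIntegral_nonneg measurableSet_Ioi (fun s _ => (Real.exp_pos _).le)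

lemma integral_gauss_real : (∫ s : ℝ, Real.exp (-s ^ 2)) = Real.sqrt Real.pi := by
  simpa using integral_gaussian 1

lemma erfc_le {t : ℝ} (ht : 0 ≤ t) : erfc t ≤ 2 * Real.exp (-t ^ 2) := by
  have key : (∫ s in Ioi t, Real.exp (-s ^ 2))
      ≤ Real.exp (-t ^ 2) * Real.sqrt Real.pi := by
    have h1 : (∫ s in Ioi t, Real.exp (-s ^ 2))
        ≤ ∫ s in Ioi t, Real.exp (-t ^ 2) * Real.exp (-(s - t) ^ 2) := by
      apply setIntegral_mono_on gauss_integrable.integrableOn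
        (((gauss_integrable.comp_sub_right t).const_mul _).integrableOn)
        measurableSet_Ioi
      intro s hs
      rw [← Real.exp_add]
      apply Real.exp_le_exp.2
      nlinarith [le_of_lt (mem_Ioi.1 hs)]
    have h2 : (∫ s in Ioi t, Real.exp (-t ^ 2) * Real.exp (-(s - t) ^ 2))
        ≤ ∫ s : ℝ, Real.exp (-t ^ 2) * Real.exp (-(s - t) ^ 2) := by
      apply setIntegral_le_integral ((gauss_integrable.comp_sub_right t).const_mul _)
      filter_upwards with s using by positivity
    have h3 : (∫ s : ℝ, Real.exp (-t ^ 2) * Real.exp (-(s - t) ^ 2))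
        = Real.exp (-t ^ 2) * Real.sqrt Real.pi := by
      rw [MeasureTheory.integral_const_mul]
      congr 1
      rw [← integral_gauss_real]
      exact integral_sub_right_eq_self (fun s => Real.exp (-s ^ 2)) t
    linarith
  rw [erfc]
  calc (2 / Real.sqrt Real.pi) * (∫ s in Ioi t, Real.exp (-s ^ 2))
      ≤ (2 / Real.sqrt Real.pi) * (Real.exp (-t ^ 2) * Real.sqrt Real.pi) := by
        apply mul_le_mul_of_nonneg_left key (by positivity)
    _ = 2 * Real.exp (-t ^ 2) := by field_simp

noncomputable def Ifun (v : ℝ) : ℝ :=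
  ∫ u in (0:ℝ)..(1 / Real.sqrt 2), Real.exp (-(2 * v ^ 2 * (1 - u ^ 2))) / (1 - u ^ 2)

lemma mem_facts {u : ℝ} (hu : u ∈ Set.uIcc (0:ℝ) (1 / Real.sqrt 2)) :
    (1:ℝ)/2 ≤ 1 - u ^ 2 ∧ 1 - u ^ 2 ≤ 1 := by
  have h2 : Real.sqrt 2 > 0 := Real.sqrt_pos.2 (by norm_num)
  rw [Set.uIcc_of_le (by positivity)] at hu
  obtain ⟨h0, h1⟩ := hu
  have : u ^ 2 ≤ (1 / Real.sqrt 2) ^ 2 := by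
    apply pow_le_pow_left₀ h0 h1
  have hs : (1 / Real.sqrt 2) ^ 2 = 1 / 2 := by
    rw [div_pow, Real.sq_sqrt (by norm_num : (2:ℝ) ≥ 0)]; norm_num
  constructor <;> nlinarith [sq_nonneg u]

lemma Ifun_contOn (v : ℝ) :
    ContinuousOn (fun u => Real.exp (-(2 * v ^ 2 * (1 - u ^ 2))) / (1 - u ^ 2))
      (Set.uIcc (0:ℝ) (1 / Real.sqrt 2)) := by
  apply ContinuousOn.div
  · exact (Continuous.continuousOn (by continuity))
  · exact (Continuous.continuousOn (by continuity))
  · intro u hu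
    have := (mem_facts hu).1
    linarith

lemma Ifun_intervalIntegrable (v : ℝ) :
    IntervalIntegrable (fun u => Real.exp (-(2 * v ^ 2 * (1 - u ^ 2))) / (1 - u ^ 2))
      volume 0 (1 / Real.sqrt 2) :=
  (Ifun_contOn v).intervalIntegrable

lemma Ifun_hasDerivAt_aux (v₀ : ℝ) :
    HasDerivAt Ifun
      (∫ u in (0:ℝ)..(1 / Real.sqrt 2), -4 * v₀ * Real.exp (-(2 * v₀ ^ 2 * (1 - u ^ 2)))) v₀ := by
  have key := intervalIntegral.hasDerivAt_integral_of_dominated_loc_of_deriv_le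
    (F := fun v u => Real.exp (-(2 * v ^ 2 * (1 - u ^ 2))) / (1 - u ^ 2))
    (F' := fun v u => -4 * v * Real.exp (-(2 * v ^ 2 * (1 - u ^ 2))))
    (x₀ := v₀) (a := (0:ℝ)) (b := 1 / Real.sqrt 2) (μ := volume)
    (bound := fun _ => 4 * (|v₀| + 1))
    (s := Metric.ball v₀ 1) (Metric.ball_mem_nhds v₀ one_pos)
    ?_ (Ifun_intervalIntegrable v₀) ?_ ?_ ?_ ?_
  · exact key.2
  · filter_upwards with x
    apply Measurable.aestronglyMeasurable
    exact (Real.measurable_exp.comp (by measurability)).div (by measurability)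
  · apply Continuous.aestronglyMeasurable; continuity
  · filter_upwards with u hu x hx
    have h1 : (0:ℝ) ≤ 1 - u ^ 2 := by
      have := (mem_facts (Set.uIoc_subset_uIcc hu)).1; linarith
    have hexp : Real.exp (-(2 * x ^ 2 * (1 - u ^ 2))) ≤ 1 := by
      rw [Real.exp_le_one_iff]
      nlinarith [sq_nonneg x]
    have hx1 : |x| ≤ |v₀| + 1 := by
      have := abs_sub_abs_le_abs_sub x v₀
      have h2 : |x - v₀| < 1 := by simpa [Real.dist_eq] using Metric.mem_ball.1 hx
      linarith
    have hpos : (0:ℝ) < Real.exp (-(2 * x ^ 2 * (1 - u ^ 2))) := Real.exp_pos _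
    rw [Real.norm_eq_abs, abs_mul, abs_mul]
    calc |(-4:ℝ)| * |x| * |Real.exp (-(2 * x ^ 2 * (1 - u ^ 2)))|
        = 4 * |x| * Real.exp (-(2 * x ^ 2 * (1 - u ^ 2))) := by
          rw [abs_of_pos hpos]; norm_num
      _ ≤ 4 * (|v₀| + 1) * 1 := by
          apply mul_le_mul (by nlinarith [abs_nonneg x]) hexp hpos.le (by positivity)
      _ = 4 * (|v₀| + 1) := by ring
  · exact intervalIntegrable_const
  · filter_upwards with u hu x hx
    have hu' : u ∈ Set.uIcc (0:ℝ) (1 / Real.sqrt 2) := Set.uIoc_subset_uIcc hu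
    have hne : 1 - u ^ 2 ≠ 0 := by have := (mem_facts hu').1; linarith
    have hd : HasDerivAt (fun x : ℝ => Real.exp (-(2 * x ^ 2 * (1 - u ^ 2))))
        ((-(4 * x * (1 - u ^ 2))) * Real.exp (-(2 * x ^ 2 * (1 - u ^ 2)))) x := by
      have hinner : HasDerivAt (fun x : ℝ => -(2 * x ^ 2 * (1 - u ^ 2)))
          (-(4 * x * (1 - u ^ 2))) x := by
        have := ((hasDerivAt_pow 2 x).const_mul (2:ℝ)).mul_const (1 - u ^ 2)
        refine this.neg.congr_deriv ?_; ring
      simpa [mul_comm] using hinner.exp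
    have := hd.div_const (1 - u ^ 2)
    refine this.congr_deriv ?_
    field_simp

lemma erfi_integral (v : ℝ) :
    (∫ s in (0:ℝ)..v, Real.exp (s ^ 2)) = Real.sqrt Real.pi / 2 * erfi v := by
  rw [erfi]
  have := sqrt_pi_pos
  field_simp

lemma deriv_int_eq (v : ℝ) :
    (∫ u in (0:ℝ)..(1 / Real.sqrt 2), -4 * v * Real.exp (-(2 * v ^ 2 * (1 - u ^ 2))))
      = -(Real.sqrt 2 * Real.sqrt Real.pi) * Real.exp (-(2 * v ^ 2)) * erfi v := by
  have h2 : (0:ℝ) < Real.sqrt 2 := Real.sqrt_pos.2 (by norm_num)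
  have hsq : Real.sqrt 2 ^ 2 = 2 := Real.sq_sqrt (by norm_num)
  by_cases hv : v = 0
  · simp [hv, erfi]
  · have hc : Real.sqrt 2 * v ≠ 0 := mul_ne_zero h2.ne' hv
    have hre : ∀ u : ℝ, -4 * v * Real.exp (-(2 * v ^ 2 * (1 - u ^ 2)))
        = (-4 * v * Real.exp (-(2 * v ^ 2))) *
          (fun s : ℝ => Real.exp (s ^ 2)) (Real.sqrt 2 * v * u) := by
      intro u
      simp only
      have hexp : -(2 * v ^ 2 * (1 - u ^ 2)) = -(2 * v ^ 2) + (Real.sqrt 2 * v * u) ^ 2 := by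
        linear_combination (-(v ^ 2 * u ^ 2)) * hsq
      rw [hexp, Real.exp_add]
      ring
    calc (∫ u in (0:ℝ)..(1 / Real.sqrt 2), -4 * v * Real.exp (-(2 * v ^ 2 * (1 - u ^ 2))))
        = ∫ u in (0:ℝ)..(1 / Real.sqrt 2), (-4 * v * Real.exp (-(2 * v ^ 2))) *
            (fun s : ℝ => Real.exp (s ^ 2)) (Real.sqrt 2 * v * u) := by
          simp only [hre]
      _ = (-4 * v * Real.exp (-(2 * v ^ 2))) *
            ∫ u in (0:ℝ)..(1 / Real.sqrt 2),
              (fun s : ℝ => Real.exp (s ^ 2)) (Real.sqrt 2 * v * u) := by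
          rw [intervalIntegral.integral_const_mul]
      _ = (-4 * v * Real.exp (-(2 * v ^ 2))) *
            ((Real.sqrt 2 * v)⁻¹ • ∫ s in (Real.sqrt 2 * v * 0)..(Real.sqrt 2 * v * (1 / Real.sqrt 2)), Real.exp (s ^ 2)) := by
          rw [intervalIntegral.integral_comp_mul_left (fun s => Real.exp (s ^ 2)) hc]
      _ = -(Real.sqrt 2 * Real.sqrt Real.pi) * Real.exp (-(2 * v ^ 2)) * erfi v := by
          have he : Real.sqrt 2 * v * (1 / Real.sqrt 2) = v := by field_simp
          rw [mul_zero, he, erfi_integral, smul_eq_mul]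
          rw [mul_inv_rev]
          field_simp
          linear_combination (2 * erfi v) * hsq

lemma Ifun_hasDerivAt (v : ℝ) :
    HasDerivAt Ifun
      (-(Real.sqrt 2 * Real.sqrt Real.pi) * Real.exp (-(2 * v ^ 2)) * erfi v) v := by
  rw [← deriv_int_eq]
  exact Ifun_hasDerivAt_aux v

lemma erfc_cont : Continuous erfc :=
  continuous_iff_continuousAt.2 fun t => (erfc_hasDerivAt t).continuousAt

noncomputable def G (v : ℝ) : ℝ :=
  Real.sqrt Real.pi / 2 * erfc (Real.sqrt 2 * v) * erfi v - (1 / Real.sqrt Real.pi) * Ifun v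

lemma G_hasDerivAt (v : ℝ) :
    HasDerivAt G (Real.exp (v ^ 2) * erfc (Real.sqrt 2 * v)) v := by
  have hsq : Real.sqrt 2 ^ 2 = 2 := Real.sq_sqrt (by norm_num)
  have h1 : HasDerivAt (fun v : ℝ => erfc (Real.sqrt 2 * v))
      (-(2 / Real.sqrt Real.pi * Real.exp (-(Real.sqrt 2 * v) ^ 2)) * Real.sqrt 2) v := by
    exact (erfc_hasDerivAt _).comp v (by simpa using (hasDerivAt_id v).const_mul (Real.sqrt 2))
  have hG := ((h1.mul (erfi_hasDerivAt v)).const_mul (Real.sqrt Real.pi / 2)).sub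
    ((Ifun_hasDerivAt v).const_mul (1 / Real.sqrt Real.pi))
  convert hG using 1
  · rfl
  · rfl
  · funext x; rw [G]; simp only [Pi.sub_apply, Pi.mul_apply]; ring
  · have hexp : (-(Real.sqrt 2 * v) ^ 2 : ℝ) = -(2 * v ^ 2) := by
      rw [mul_pow, hsq]
    rw [hexp]
    have hpi := sqrt_pi_pos
    have hpi2 : Real.sqrt Real.pi ^ 2 = Real.pi := Real.sq_sqrt Real.pi_pos.le
    field_simp
    have hc : erfc (v * Real.sqrt 2) = erfc (Real.sqrt 2 * v) := by rw [mul_comm]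
    have hee : Real.exp (-(v ^ 2 * 2)) = Real.exp (-(2 * v ^ 2)) := by ring_nf
    ring

lemma erfi_nonneg {v : ℝ} (hv : 0 ≤ v) : 0 ≤ erfi v := by
  apply mul_nonneg (by positivity)
  exact intervalIntegral.integral_nonneg hv fun s _ => (Real.exp_pos _).le

lemma erfi_le {v : ℝ} (hv : 0 ≤ v) :
    erfi v ≤ 2 / Real.sqrt Real.pi * (v * Real.exp (v ^ 2)) := by
  have hcont : Continuous (fun s : ℝ => Real.exp (s ^ 2)) := by continuity
  have h : (∫ s in (0:ℝ)..v, Real.exp (s ^ 2)) ≤ ∫ _ in (0:ℝ)..v, Real.exp (v ^ 2) := by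
    apply intervalIntegral.integral_mono_on hv (hcont.intervalIntegrable 0 v)
      intervalIntegrable_const
    intro s hs
    apply Real.exp_le_exp.2
    nlinarith [hs.1, hs.2]
  rw [intervalIntegral.integral_const, smul_eq_mul, sub_zero] at h
  rw [erfi]
  have : (0:ℝ) ≤ 2 / Real.sqrt Real.pi := by positivity
  calc 2 / Real.sqrt Real.pi * ∫ s in (0:ℝ)..v, Real.exp (s ^ 2)
      ≤ 2 / Real.sqrt Real.pi * (v * Real.exp (v ^ 2)) := by
        exact mul_le_mul_of_nonneg_left h this

lemma tendsto_exp_neg_sq : Filter.Tendsto (fun v : ℝ => Real.exp (-v ^ 2)) atTop (nhds 0) := by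
  apply Real.tendsto_exp_atBot.comp
  exact Filter.tendsto_neg_atTop_atBot.comp (tendsto_pow_atTop two_ne_zero)

lemma tendsto_erfc_erfi :
    Filter.Tendsto (fun v => erfc (Real.sqrt 2 * v) * erfi v) atTop (nhds 0) := by
  have hsq : Real.sqrt 2 ^ 2 = 2 := Real.sq_sqrt (by norm_num)
  apply squeeze_zero' (g := fun v => 4 / Real.sqrt Real.pi * (v * Real.exp (-v)))
  · filter_upwards [Filter.eventually_ge_atTop (0:ℝ)] with v hv
    exact mul_nonneg (erfc_nonneg _) (erfi_nonneg hv)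
  · filter_upwards [Filter.eventually_ge_atTop (1:ℝ)] with v hv
    have hv0 : (0:ℝ) ≤ v := by linarith
    have h1 : erfc (Real.sqrt 2 * v) ≤ 2 * Real.exp (-(2 * v ^ 2)) := by
      have := erfc_le (t := Real.sqrt 2 * v) (by positivity)
      rwa [mul_pow, hsq] at this
    have h2 := erfi_le hv0
    calc erfc (Real.sqrt 2 * v) * erfi v
        ≤ (2 * Real.exp (-(2 * v ^ 2))) * (2 / Real.sqrt Real.pi * (v * Real.exp (v ^ 2))) := by
          apply mul_le_mul h1 h2 (erfi_nonneg hv0) (by positivity)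
      _ = 4 / Real.sqrt Real.pi * (v * Real.exp (-(2 * v ^ 2) + v ^ 2)) := by
          rw [Real.exp_add]; ring
      _ ≤ 4 / Real.sqrt Real.pi * (v * Real.exp (-v)) := by
          apply mul_le_mul_of_nonneg_left _ (by positivity)
          apply mul_le_mul_of_nonneg_left _ hv0
          apply Real.exp_le_exp.2
          nlinarith
  · have h := (Real.tendsto_pow_mul_exp_neg_atTop_nhds_zero 1).const_mul
      (4 / Real.sqrt Real.pi)
    simpa using h

lemma tendsto_Ifun : Filter.Tendsto Ifun atTop (nhds 0) := by
  have hg : Filter.Tendsto (fun v : ℝ => 2 * Real.exp (-v ^ 2) * |1 / Real.sqrt 2 - 0|)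
      atTop (nhds 0) := by
    have := (tendsto_exp_neg_sq.const_mul 2).mul_const |1 / Real.sqrt 2 - 0|
    simpa using this
  apply squeeze_zero_norm _ hg
  · intro v
    apply intervalIntegral.norm_integral_le_of_norm_le_const
    intro u hu
    have hf := mem_facts (Set.uIoc_subset_uIcc hu)
    have hpos : (0:ℝ) < 1 - u ^ 2 := by linarith [hf.1]
    rw [Real.norm_eq_abs, abs_div, abs_of_pos (Real.exp_pos _), abs_of_pos hpos]
    have he : Real.exp (-(2 * v ^ 2 * (1 - u ^ 2))) ≤ Real.exp (-v ^ 2) := by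
      apply Real.exp_le_exp.2
      nlinarith [sq_nonneg v, hf.1]
    rw [div_le_iff₀ hpos]
    nlinarith [Real.exp_pos (-(2 * v ^ 2 * (1 - u ^ 2))), hf.1,
      Real.exp_pos (-v ^ 2)]

lemma tendsto_G : Filter.Tendsto G atTop (nhds 0) := by
  have h1 := tendsto_erfc_erfi.const_mul (Real.sqrt Real.pi / 2)
  have h2 := tendsto_Ifun.const_mul (1 / Real.sqrt Real.pi)
  have := h1.sub h2
  simp only [mul_zero, sub_zero] at this
  apply this.congr
  intro v
  rw [G]
  ring

lemma f_cont : Continuous (fun v : ℝ => Real.exp (v ^ 2) * erfc (Real.sqrt 2 * v)) := by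
  exact (Real.continuous_exp.comp (by continuity)).mul (erfc_cont.comp (by continuity))

lemma f_integrableOn (w : ℝ) :
    IntegrableOn (fun v => Real.exp (v ^ 2) * erfc (Real.sqrt 2 * v)) (Set.Ioi w) volume := by
  have hsq : Real.sqrt 2 ^ 2 = 2 := Real.sq_sqrt (by norm_num)
  have hM : w ≤ max w 0 := le_max_left w 0
  rw [← Set.Ioc_union_Ioi_eq_Ioi hM]
  apply IntegrableOn.union
  · exact f_cont.integrableOn_Ioc
  · apply Integrable.mono' ((gauss_integrable.const_mul 2).integrableOn)
      f_cont.aestronglyMeasurable.restrict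
    rw [ae_restrict_iff' measurableSet_Ioi]
    filter_upwards with v hv
    have hv0 : (0:ℝ) ≤ v := le_trans (le_max_right w 0) (le_of_lt hv)
    have h1 : erfc (Real.sqrt 2 * v) ≤ 2 * Real.exp (-(2 * v ^ 2)) := by
      have := erfc_le (t := Real.sqrt 2 * v) (by positivity)
      rwa [mul_pow, hsq] at this
    rw [Real.norm_eq_abs, abs_of_nonneg (mul_nonneg (Real.exp_pos _).le (erfc_nonneg _))]
    calc Real.exp (v ^ 2) * erfc (Real.sqrt 2 * v)
        ≤ Real.exp (v ^ 2) * (2 * Real.exp (-(2 * v ^ 2))) :=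
          mul_le_mul_of_nonneg_left h1 (Real.exp_pos _).le
      _ = 2 * Real.exp (-v ^ 2) := by
          rw [mul_comm (Real.exp (v ^ 2)), mul_assoc, ← Real.exp_add]
          ring_nf

/-- Closed form for the class AII† edge integral: for every `w ∈ ℝ`,
`∫_w^∞ e^{v²} erfc(√2 v) dv` converges and equals
`−(√π/2) erfc(√2 w) erfi(w) + (1/√π) ∫_0^{1/√2} e^{−2w²(1−u²)}/(1−u²) du`. -/
theorem statement13 (w : ℝ) :
    IntegrableOn (fun v => Real.exp (v ^ 2) * erfc (Real.sqrt 2 * v)) (Set.Ioi w) volume ∧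
      (∫ v in Set.Ioi w, Real.exp (v ^ 2) * erfc (Real.sqrt 2 * v))
        = -(Real.sqrt Real.pi / 2) * erfc (Real.sqrt 2 * w) * erfi w +
            (1 / Real.sqrt Real.pi) *
              ∫ u in (0 : ℝ)..(1 / Real.sqrt 2),
                Real.exp (-(2 * w ^ 2 * (1 - u ^ 2))) / (1 - u ^ 2) := by
  refine ⟨f_integrableOn w, ?_⟩
  have key := integral_Ioi_of_hasDerivAt_of_tendsto' (a := w) (f := G)
    (fun x _ => G_hasDerivAt x) (f_integrableOn w) tendsto_G
  rw [key, G, Ifun]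
  ring
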